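/- arXiv:2006.04348 — 3 statements merged into one kernel-verified Lean document; each statement's English description precedes it below -/
import Mathlib

section
/- Let u : ℝ × ℝ → ℝ be twice continuously differentiable with ∂u/∂β(0,0) ≠ 0, and suppose there are constants C₀ > 0 and δ₀ > 0 such that |u(τ, 0)| ≤ C₀·τ³ for all τ ∈ [0, δ₀]. Let β : [0, δ₀] → ℝ be continuous with β(0) = 0 and u(τ, β(τ)) = 0 for all τ ∈ [0, δ₀]. Then there exist C > 0 and δ ∈ (0, δ₀] such that |β(τ)| ≤ C·τ³ for all τ ∈ [0, δ]. -/
open Matrix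
open scoped RealInnerProductSpace ContDiff

noncomputable section

/-- Action of a real `m × n` matrix on a vector of `EuclideanSpace ℝ (Fin n)`,
viewed as a vector of `EuclideanSpace ℝ (Fin m)`. -/
def matVec {m n : ℕ} (M : Matrix (Fin m) (Fin n) ℝ) (x : EuclideanSpace ℝ (Fin n)) :
    EuclideanSpace ℝ (Fin m) := WithLp.toLp 2 (M.mulVec x)


/-- abstract asymptotic lemma. If `u` is `C²` with
`∂u/∂β (0,0) ≠ 0`, `|u(τ,0)| ≤ C₀ τ³` on `[0, δ₀]`, and `β` is continuous with
`β 0 = 0` and `u(τ, β(τ)) = 0` on `[0, δ₀]`, then `|β(τ)| ≤ C τ³` near `0`. -/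
theorem implicit_root_cubic_bound
    (u : ℝ × ℝ → ℝ) (hu : ContDiff ℝ 2 u)
    (hpartial : deriv (fun b : ℝ => u (0, b)) 0 ≠ 0)
    (C₀ δ₀ : ℝ) (hC₀ : 0 < C₀) (hδ₀ : 0 < δ₀)
    (hres : ∀ τ ∈ Set.Icc (0 : ℝ) δ₀, |u (τ, 0)| ≤ C₀ * τ ^ 3)
    (β : ℝ → ℝ) (hβcont : ContinuousOn β (Set.Icc 0 δ₀)) (hβ0 : β 0 = 0)
    (hβroot : ∀ τ ∈ Set.Icc (0 : ℝ) δ₀, u (τ, β τ) = 0) :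
    ∃ C > (0 : ℝ), ∃ δ : ℝ, 0 < δ ∧ δ ≤ δ₀ ∧
      ∀ τ ∈ Set.Icc (0 : ℝ) δ, |β τ| ≤ C * τ ^ 3 := by
  classical
  have hud : Differentiable ℝ u := hu.differentiable (by norm_num)
  set D : ℝ × ℝ → ℝ := fun p => fderiv ℝ u p (0, 1) with hDdef
  have hderiv : ∀ τ b : ℝ, HasDerivAt (fun b => u (τ, b)) (D (τ, b)) b := by
    intro τ b
    have h1 : HasDerivAt (fun b : ℝ => ((τ, b) : ℝ × ℝ)) ((0 : ℝ), (1 : ℝ)) b :=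
      (hasDerivAt_const _ _).prodMk (hasDerivAt_id _)
    exact ((hud (τ, b)).hasFDerivAt.comp_hasDerivAt b h1)
  have hDcont : Continuous D := by
    have h1 : Continuous (fderiv ℝ u) := hu.continuous_fderiv (by norm_num)
    exact h1.clm_apply continuous_const
  set L : ℝ := D (0, 0) with hLdef
  have hL : L ≠ 0 := by
    have h := (hderiv 0 0).deriv
    show D (0, 0) ≠ 0
    rwa [← h]
  have hLpos : 0 < |L| := abs_pos.mpr hL
  -- continuity of D at (0,0)
  obtain ⟨δ₁, hδ₁pos, hδ₁⟩ : ∃ δ₁ > 0, ∀ p : ℝ × ℝ, dist p (0, 0) < δ₁ →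
      |D p - L| < |L| / 2 := by
    have := Metric.continuousAt_iff.mp (hDcont.continuousAt (x := ((0 : ℝ), (0 : ℝ))))
      (|L| / 2) (by positivity)
    obtain ⟨δ₁, h1, h2⟩ := this
    exact ⟨δ₁, h1, fun p hp => by simpa [Real.dist_eq] using h2 hp⟩
  -- continuity of β at 0
  obtain ⟨δ₂, hδ₂pos, hδ₂⟩ : ∃ δ₂ > 0, ∀ x ∈ Set.Icc (0 : ℝ) δ₀, dist x 0 < δ₂ →
      |β x| < δ₁ / 2 := by
    have := Metric.continuousWithinAt_iff.mp (hβcont 0 ⟨le_rfl, hδ₀.le⟩)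
      (δ₁ / 2) (by positivity)
    obtain ⟨δ₂, h1, h2⟩ := this
    refine ⟨δ₂, h1, fun x hx hdx => ?_⟩
    have := h2 hx hdx
    simpa [hβ0, Real.dist_eq] using this
  set δ : ℝ := min δ₀ (min (δ₁ / 2) (δ₂ / 2)) with hδdef
  have hδpos : 0 < δ := by positivity
  have hδle : δ ≤ δ₀ := min_le_left _ _
  refine ⟨2 * C₀ / |L|, by positivity, δ, hδpos, hδle, fun τ hτ => ?_⟩
  have hτ0 : 0 ≤ τ := hτ.1
  have hτδ₀ : τ ∈ Set.Icc (0 : ℝ) δ₀ := ⟨hτ0, hτ.2.trans hδle⟩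
  have hβsmall : |β τ| < δ₁ / 2 := by
    apply hδ₂ τ hτδ₀
    have : τ ≤ δ₂ / 2 := hτ.2.trans ((min_le_right _ _).trans (min_le_right _ _))
    rw [Real.dist_eq, sub_zero, abs_of_nonneg hτ0]
    linarith
  have hτδ₁ : τ < δ₁ := by
    have : τ ≤ δ₁ / 2 := hτ.2.trans ((min_le_right _ _).trans (min_le_left _ _))
    linarith
  by_cases hβz : β τ = 0
  · rw [hβz, abs_zero]; positivity
  -- Mean value theorem: ∃ c between 0 and β τ with D (τ, c) * β τ = - u (τ, 0)
  have hroot : u (τ, β τ) = 0 := hβroot τ hτδ₀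
  obtain ⟨c, hcabs, hceq⟩ : ∃ c : ℝ, |c| ≤ |β τ| ∧ D (τ, c) * β τ = - u (τ, 0) := by
    rcases lt_or_gt_of_ne hβz with hneg | hpos
    · obtain ⟨c, hc, heq⟩ := exists_hasDerivAt_eq_slope (fun b => u (τ, b))
        (fun b => D (τ, b)) hneg
        (Continuous.continuousOn (by
          exact hu.continuous.comp (continuous_const.prodMk continuous_id)))
        (fun x _ => hderiv τ x)
      refine ⟨c, ?_, ?_⟩
      · rw [abs_of_neg hneg, abs_of_nonpos hc.2.le]; linarith [hc.1]
      · rw [hroot] at heq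
        rw [heq]
        field_simp
        ring
    · obtain ⟨c, hc, heq⟩ := exists_hasDerivAt_eq_slope (fun b => u (τ, b))
        (fun b => D (τ, b)) hpos
        (Continuous.continuousOn (by
          exact hu.continuous.comp (continuous_const.prodMk continuous_id)))
        (fun x _ => hderiv τ x)
      refine ⟨c, ?_, ?_⟩
      · rw [abs_of_pos hpos, abs_of_nonneg hc.1.le]; linarith [hc.2]
      · rw [hroot] at heq
        rw [heq]
        field_simp
        ring
  have hcδ₁ : dist ((τ, c) : ℝ × ℝ) (0, 0) < δ₁ := by
    rw [Prod.dist_eq]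
    apply max_lt
    · rw [Real.dist_eq, sub_zero, abs_of_nonneg hτ0]; exact hτδ₁
    · rw [Real.dist_eq, sub_zero]
      calc |c| ≤ |β τ| := hcabs
        _ < δ₁ / 2 := hβsmall
        _ < δ₁ := by linarith
  have hDlow : |L| / 2 ≤ |D (τ, c)| := by
    have := hδ₁ _ hcδ₁
    have h2 := abs_sub_abs_le_abs_sub (D (τ, c)) L
    have h3 := abs_sub_abs_le_abs_sub L (D (τ, c))
    rw [abs_sub_comm] at h3
    linarith
  have hures : |u (τ, 0)| ≤ C₀ * τ ^ 3 := hres τ hτδ₀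
  have hkey : |D (τ, c)| * |β τ| ≤ C₀ * τ ^ 3 := by
    rw [← abs_mul, hceq, abs_neg]; exact hures
  have hDpos : 0 < |D (τ, c)| := lt_of_lt_of_le (by positivity) hDlow
  rw [div_mul_eq_mul_div, le_div_iff₀ hLpos]
  calc |β τ| * |L| ≤ |β τ| * (2 * |D (τ, c)|) := by
        apply mul_le_mul_of_nonneg_left _ (abs_nonneg _)
        linarith
    _ = 2 * (|D (τ, c)| * |β τ|) := by ring
    _ ≤ 2 * (C₀ * τ ^ 3) := by linarith
    _ = 2 * C₀ * τ ^ 3 := by ring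
end
end

section
/- There exist C > 0 and τ₀ > 0 such that for all τ ∈ [0, τ₀]: ‖Φ̃(τ) − Φ(t₀ + τ/2)‖ ≤ C·τ², i.e. the predictor Φ̃ is a second-order accurate approximation of the exact solution at the half step t₀ + τ/2. -/
open Matrix
open scoped RealInnerProductSpace ContDiff

noncomputable section

variable (n : ℕ)
local notation "E" => EuclideanSpace ℝ (Fin n)

set_option maxHeartbeats 2000000 in
/-- The predictor `Φ̃` is a second-order accurate approximation of the
exact solution at the half step `t₀ + τ/2`. -/
theorem svm_predictor_half_step_second_order
    (M L : Matrix (Fin n) (Fin n) ℝ)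
    (hMsymm : M.IsSymm) (hLsymm : L.IsSymm)
    (hMpsd : ∀ x : E, 0 ≤ ⟪x, matVec M x⟫)
    (hLpd : ∀ x : E, x ≠ 0 → 0 < ⟪x, matVec L x⟫)
    (f : E → ℝ) (hf : ContDiff ℝ ∞ f)
    (F : E → ℝ) (hF : ∀ Φ0 : E, F Φ0 = (1 / 2) * ⟪Φ0, matVec L Φ0⟫ + f Φ0)
    (Φ : ℝ → E) (hΦ : ContDiff ℝ ∞ Φ)
    (hODE : ∀ t : ℝ, HasDerivAt Φ (-matVec M (matVec L (Φ t) + gradient f (Φ t))) t)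
    (t₀ : ℝ)
    (Φbar : ℝ → E)
    (hΦbar : ∀ τ : ℝ, Φbar τ = (3 / 2 : ℝ) • Φ t₀ - (1 / 2 : ℝ) • Φ (t₀ - τ))
    (Φtilde : ℝ → E)
    (hΦtilde : ∀ τ : ℝ, Φtilde τ =
      matVec ((1 + (τ / 2) • (M * L))⁻¹) (Φ t₀ - (τ / 2) • matVec M (gradient f (Φbar τ))))
    (μstar : ℝ → E)
    (hμstar : ∀ τ : ℝ, μstar τ = matVec L (Φtilde τ) + gradient f (Φtilde τ))
    (Ftilde : ℝ → ℝ)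
    (hFtilde : ∀ τ : ℝ, Ftilde τ = F (Φ t₀) - τ * ⟪μstar τ, matVec M (μstar τ)⟫)
    (Φhat : ℝ → E)
    (hΦhat : ∀ τ : ℝ, Φhat τ = matVec ((1 + (τ / 2) • (M * L))⁻¹)
      (matVec (1 - (τ / 2) • (M * L)) (Φ t₀) - τ • matVec M (gradient f (Φtilde τ)))) :
    ∃ C > (0 : ℝ), ∃ τ₀ > (0 : ℝ), ∀ τ ∈ Set.Icc (0 : ℝ) τ₀,
      ‖Φtilde τ - Φ (t₀ + τ / 2)‖ ≤ C * τ ^ 2 := by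
  classical
  -- matrices acting as continuous linear maps
  set T : Matrix (Fin n) (Fin n) ℝ → (E →L[ℝ] E) := fun A => (Matrix.toEuclideanCLM (𝕜 := ℝ) A : EuclideanSpace ℝ (Fin n) →L[ℝ] EuclideanSpace ℝ (Fin n)) with hTdef
  have hmv : ∀ (A : Matrix (Fin n) (Fin n) ℝ) (x : E), matVec A x = T A x := fun _ _ => rfl
  -- smoothness of the gradient
  have hgrad : ContDiff ℝ ∞ (gradient f) := by
    have h1 : gradient f = fun x => (InnerProductSpace.toDual ℝ _).symm (fderiv ℝ f x) := rfl
    rw [h1]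
    exact ((InnerProductSpace.toDual ℝ _).symm.toContinuousLinearEquiv.contDiff).comp
      (hf.fderiv_right (by simp))
  have h1le : (1 : WithTop ℕ∞) ≤ ∞ := by exact_mod_cast le_top
  -- smooth auxiliary functions
  have hhalf : ContDiff ℝ ∞ (fun τ : ℝ => Φ (t₀ + τ / 2)) :=
    hΦ.comp (contDiff_const.add (contDiff_id.div_const 2))
  have hΦbarC : ContDiff ℝ ∞ Φbar := by
    have h2 : Φbar = fun τ => (3 / 2 : ℝ) • Φ t₀ - (1 / 2 : ℝ) • Φ (t₀ - τ) := funext hΦbar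
    rw [h2]
    exact contDiff_const.sub
      ((hΦ.comp (contDiff_const.sub contDiff_id)).const_smul (1 / 2 : ℝ))
  set w₁ : ℝ → E := fun τ => T M (gradient f (Φbar τ)) with hw₁def
  set w₂ : ℝ → E := fun τ => T (M * L) (Φ (t₀ + τ / 2)) with hw₂def
  have hw₁ : ContDiff ℝ ∞ w₁ := (T M).contDiff.comp (hgrad.comp hΦbarC)
  have hw₂ : ContDiff ℝ ∞ w₂ := (T (M * L)).contDiff.comp hhalf
  set G : ℝ → E := fun τ =>
    Φ t₀ - (τ / 2) • w₁ τ - Φ (t₀ + τ / 2) - (τ / 2) • w₂ τ with hGdef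
  have hGsm : ContDiff ℝ ∞ G :=
    ((contDiff_const.sub ((contDiff_id.div_const 2).smul hw₁)).sub hhalf).sub
      ((contDiff_id.div_const 2).smul hw₂)
  have hG0 : G 0 = 0 := by
    simp [hGdef]
  -- functions Φbar at 0
  have hΦbar0 : Φbar 0 = Φ t₀ := by
    rw [hΦbar]
    rw [sub_zero, ← sub_smul]
    norm_num
  -- derivative of G at 0 vanishes
  have hc : HasDerivAt (fun τ : ℝ => τ / 2) (1 / 2) 0 := (hasDerivAt_id 0).div_const 2
  have hw₁d : HasDerivAt w₁ (deriv w₁ 0) 0 :=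
    ((hw₁.differentiable (by simp)) 0).hasDerivAt
  have hw₂d : HasDerivAt w₂ (deriv w₂ 0) 0 :=
    ((hw₂.differentiable (by simp)) 0).hasDerivAt
  have hsmul₁ : HasDerivAt (fun τ : ℝ => (τ / 2) • w₁ τ) ((1 / 2 : ℝ) • w₁ 0) 0 := by
    have h := hc.smul hw₁d; simp only [zero_div, zero_smul, zero_add] at h; exact h
  have hsmul₂ : HasDerivAt (fun τ : ℝ => (τ / 2) • w₂ τ) ((1 / 2 : ℝ) • w₂ 0) 0 := by
    have h := hc.smul hw₂d; simp only [zero_div, zero_smul, zero_add] at h; exact h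
  set V : E := -matVec M (matVec L (Φ t₀) + gradient f (Φ t₀)) with hVdef
  have hODE0 : HasDerivAt Φ V (t₀ + 0 / 2) := by
    rw [show t₀ + 0 / 2 = t₀ by norm_num]
    exact hODE t₀
  have hin : HasDerivAt (fun τ : ℝ => t₀ + τ / 2) (1 / 2) 0 := hc.const_add t₀
  have hhalfd : HasDerivAt (fun τ : ℝ => Φ (t₀ + τ / 2)) ((1 / 2 : ℝ) • V) 0 :=
    HasDerivAt.scomp 0 hODE0 hin
  have hGd : HasDerivAt G
      (0 - (1 / 2 : ℝ) • w₁ 0 - (1 / 2 : ℝ) • V - (1 / 2 : ℝ) • w₂ 0) 0 :=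
    (((hasDerivAt_const 0 (Φ t₀)).sub hsmul₁).sub hhalfd).sub hsmul₂
  have hderiv0 : deriv G 0 = 0 := by
    rw [hGd.deriv]
    have hV : V = -(T M (T L (Φ t₀)) + T M (gradient f (Φ t₀))) := by
      rw [hVdef, hmv, hmv, map_add]
    have hw₁0 : w₁ 0 = T M (gradient f (Φ t₀)) := by rw [hw₁def]; simp [hΦbar0]
    have hw₂0 : w₂ 0 = T M (T L (Φ t₀)) := by
      rw [hw₂def]
      show T (M * L) (Φ (t₀ + 0 / 2)) = _
      rw [show t₀ + 0 / 2 = t₀ by norm_num]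
      simp only [hTdef]
      rw [_root_.map_mul]
      rfl
    rw [hV, hw₁0, hw₂0]
    module
  -- second derivative bound and Taylor-type estimate for G
  have hGdiff : Differentiable ℝ G := hGsm.differentiable (by simp)
  have hG'sm : ContDiff ℝ ∞ (deriv G) := (contDiff_infty_iff_deriv.mp hGsm).2
  have hG'diff : Differentiable ℝ (deriv G) := hG'sm.differentiable (by simp)
  have hG''cont : Continuous (deriv (deriv G)) :=
    (contDiff_infty_iff_deriv.mp hG'sm).2.continuous
  obtain ⟨K, hK⟩ := (isCompact_Icc (a := (0 : ℝ)) (b := 1)).exists_bound_of_continuousOn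
    hG''cont.continuousOn
  have hK0 : 0 ≤ K := le_trans (norm_nonneg _) (hK 0 ⟨le_refl _, zero_le_one⟩)
  have hstep1 : ∀ s ∈ Set.Icc (0 : ℝ) 1, ‖deriv G s‖ ≤ K * s := by
    intro s hs
    have h3 := (convex_Icc (0 : ℝ) 1).norm_image_sub_le_of_norm_hasDerivWithin_le
      (f := deriv G) (f' := deriv (deriv G))
      (fun x hx => ((hG'diff x).hasDerivAt).hasDerivWithinAt) hK
      ⟨le_refl _, zero_le_one⟩ hs
    rw [hderiv0, sub_zero, sub_zero, Real.norm_eq_abs, abs_of_nonneg hs.1] at h3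
    exact h3
  have hstep2 : ∀ τ ∈ Set.Icc (0 : ℝ) 1, ‖G τ‖ ≤ K * τ ^ 2 := by
    intro τ hτ
    have hbound : ∀ x ∈ Set.Icc (0 : ℝ) τ, ‖deriv G x‖ ≤ K * τ := by
      intro x hx
      exact le_trans (hstep1 x ⟨hx.1, le_trans hx.2 hτ.2⟩)
        (mul_le_mul_of_nonneg_left hx.2 hK0)
    have h3 := (convex_Icc (0 : ℝ) τ).norm_image_sub_le_of_norm_hasDerivWithin_le
      (f := G) (f' := deriv G)
      (fun x hx => ((hGdiff x).hasDerivAt).hasDerivWithinAt) hbound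
      ⟨le_refl _, hτ.1⟩ ⟨hτ.1, le_refl _⟩
    rw [hG0, sub_zero, sub_zero, Real.norm_eq_abs, abs_of_nonneg hτ.1] at h3
    calc ‖G τ‖ ≤ K * τ * τ := h3
      _ = K * τ ^ 2 := by ring
  -- invertibility and boundedness of the inverse near 0
  set A : ℝ → Matrix (Fin n) (Fin n) ℝ := fun τ => 1 + (τ / 2) • (M * L) with hAdef
  have hAcont : Continuous A :=
    continuous_const.add ((continuous_id.div_const 2).smul continuous_const)
  have hdetcont : Continuous fun τ => (A τ).det := hAcont.matrix_det
  have hdet0 : (A 0).det = 1 := by simp [hAdef]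
  have hev : ∀ᶠ τ in nhds (0 : ℝ), (A τ).det ≠ 0 :=
    hdetcont.continuousAt.eventually_ne (by rw [hdet0]; exact one_ne_zero)
  obtain ⟨δ, hδpos, hδ⟩ := Metric.eventually_nhds_iff.mp hev
  set δ' : ℝ := min (δ / 2) 1 with hδ'def
  have hδ'pos : 0 < δ' := lt_min (by linarith) one_pos
  have hδ'le1 : δ' ≤ 1 := min_le_right _ _
  have hdet_ne : ∀ τ ∈ Set.Icc (0 : ℝ) δ', (A τ).det ≠ 0 := by
    intro τ hτ
    apply hδ
    rw [Real.dist_eq, sub_zero, abs_of_nonneg hτ.1]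
    calc τ ≤ δ' := hτ.2
      _ ≤ δ / 2 := min_le_left _ _
      _ < δ := by linarith
  have hBcontOn : ContinuousOn (fun τ => (A τ)⁻¹) (Set.Icc (0 : ℝ) δ') := by
    intro τ hτ
    exact ((continuousAt_matrix_inv (A τ)
      (NormedRing.inverse_continuousAt (Units.mk0 _ (hdet_ne τ hτ)))).comp
      hAcont.continuousAt).continuousWithinAt
  set ψ : Matrix (Fin n) (Fin n) ℝ →ₗ[ℝ] (E →L[ℝ] E) :=
    { toFun := T
      map_add' := fun a b => map_add _ a b
      map_smul' := fun c a => map_smul _ c a } with hψdef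
  have hψc : Continuous ψ := ψ.continuous_of_finiteDimensional
  obtain ⟨Cop, hCop⟩ := (isCompact_Icc (a := (0 : ℝ)) (b := δ')).exists_bound_of_continuousOn
    (hψc.comp_continuousOn hBcontOn)
  have hCop0 : 0 ≤ Cop :=
    le_trans (norm_nonneg _) (hCop 0 ⟨le_refl _, le_of_lt hδ'pos⟩)
  -- the key algebraic identity
  have hkey : ∀ τ ∈ Set.Icc (0 : ℝ) δ',
      Φtilde τ - Φ (t₀ + τ / 2) = T ((A τ)⁻¹) (G τ) := by
    intro τ hτ
    have hinv : (A τ)⁻¹ * A τ = 1 :=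
      Matrix.nonsing_inv_mul _ (isUnit_iff_ne_zero.mpr (hdet_ne τ hτ))
    have hAy : ∀ y : E, T (A τ) y = y + (τ / 2) • T (M * L) y := by
      intro y
      show T (1 + (τ / 2) • (M * L)) y = _
      simp only [hTdef]
      rw [_root_.map_add, _root_.map_one, _root_.map_smul]
      rfl
    have hA_T : ∀ y : E, T ((A τ)⁻¹) (T (A τ) y) = y := by
      intro y
      have h4 : T ((A τ)⁻¹) (T (A τ) y) = T ((A τ)⁻¹ * A τ) y := by
        simp only [hTdef]
        rw [_root_.map_mul]
        rfl
      rw [h4, hinv]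
      simp only [hTdef]
      rw [_root_.map_one]
      rfl
    have hGτ : G τ = (Φ t₀ - (τ / 2) • matVec M (gradient f (Φbar τ)))
        - T (A τ) (Φ (t₀ + τ / 2)) := by
      rw [hAy]
      simp only [hGdef, hw₁def, hw₂def, hmv]
      abel
    have h5 : T ((A τ)⁻¹) (G τ) =
        T ((A τ)⁻¹) (Φ t₀ - (τ / 2) • matVec M (gradient f (Φbar τ)))
          - T ((A τ)⁻¹) (T (A τ) (Φ (t₀ + τ / 2))) := by
      rw [hGτ, map_sub]
    rw [h5, hA_T, hΦtilde τ, hmv]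
  -- final assembly
  refine ⟨Cop * K + 1, add_pos_of_nonneg_of_pos (mul_nonneg hCop0 hK0) one_pos,
    δ', hδ'pos, ?_⟩
  intro τ hτ
  have hτ1 : τ ∈ Set.Icc (0 : ℝ) 1 := ⟨hτ.1, le_trans hτ.2 hδ'le1⟩
  rw [hkey τ hτ]
  calc ‖T ((A τ)⁻¹) (G τ)‖ ≤ ‖T ((A τ)⁻¹)‖ * ‖G τ‖ := (T _).le_opNorm _
    _ ≤ Cop * (K * τ ^ 2) :=
        mul_le_mul (hCop τ hτ) (hstep2 τ hτ1) (norm_nonneg _) hCop0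
    _ ≤ (Cop * K + 1) * τ ^ 2 := by nlinarith [sq_nonneg τ]
end
end

section
/- Suppose the supplementary direction has the form g(Φ) = M·h(Φ) for some map h : ℝⁿ → ℝⁿ (as in both choices g[Φ] = M∇f(Φ) and g[Φ] = −M(LΦ + ∇f(Φ))), and let e ∈ ℝⁿ satisfy M·e = 0. Then for every τ ≥ 0 and every β ∈ ℝ, the SVM update Φⁿ⁺¹ = Φ̂(τ) + β·w(τ) satisfies ⟨e, Φⁿ⁺¹⟩ = ⟨e, Φⁿ⟩; that is, the scheme exactly conserves every linear invariant associated with the kernel of M (e.g. the total volume). -/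
open Matrix
open scoped RealInnerProductSpace ContDiff

noncomputable section

lemma matVec_ofLp {m n : ℕ} (M : Matrix (Fin m) (Fin n) ℝ) (x : EuclideanSpace ℝ (Fin n)) :
    (matVec M x).ofLp = M *ᵥ x.ofLp := rfl


variable (n : ℕ)
local notation "E" => EuclideanSpace ℝ (Fin n)

lemma vecMul_smul_matrix {n : ℕ} (v : Fin n → ℝ) (c : ℝ) (B : Matrix (Fin n) (Fin n) ℝ) :
    v ᵥ* (c • B) = c • (v ᵥ* B) := by
  rw [← Matrix.mulVec_transpose, Matrix.transpose_smul, Matrix.smul_mulVec,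
    Matrix.mulVec_transpose]

lemma inner_eq_dot {n : ℕ} (x y : EuclideanSpace ℝ (Fin n)) :
    ⟪x, y⟫ = (x : Fin n → ℝ) ⬝ᵥ (y : Fin n → ℝ) := by
  simp [PiLp.inner_apply, dotProduct, RCLike.inner_apply]
  exact Finset.sum_congr rfl (fun i _ => mul_comm _ _)

/-- If the supplementary direction has the form `g(Φ) = M·h(Φ)` and
`M·e = 0`, then for every `τ ≥ 0` and `β ∈ ℝ` the SVM update conserves the linear
invariant `⟪e, ·⟫`: `⟪e, Φ̂(τ) + β·w(τ)⟫ = ⟪e, Φⁿ⟫`. -/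
theorem svm_conserves_linear_invariants
    (M L : Matrix (Fin n) (Fin n) ℝ)
    (hMsymm : M.IsSymm) (hLsymm : L.IsSymm)
    (hMpsd : ∀ x : E, 0 ≤ ⟪x, matVec M x⟫)
    (hLpd : ∀ x : E, x ≠ 0 → 0 < ⟪x, matVec L x⟫)
    (f : E → ℝ) (hf : ContDiff ℝ ∞ f)
    (F : E → ℝ) (hF : ∀ Φ : E, F Φ = (1 / 2) * ⟪Φ, matVec L Φ⟫ + f Φ)
    (g : E → E) (hg : ContDiff ℝ ∞ g)
    (Φn Φnm1 : E)
    (Φbar : E) (hΦbar : Φbar = (3 / 2 : ℝ) • Φn - (1 / 2 : ℝ) • Φnm1)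
    (Φtilde : ℝ → E)
    (hΦtilde : ∀ τ : ℝ, Φtilde τ =
      matVec ((1 + (τ / 2) • (M * L))⁻¹) (Φn - (τ / 2) • matVec M (gradient f Φbar)))
    (μstar : ℝ → E)
    (hμstar : ∀ τ : ℝ, μstar τ = matVec L (Φtilde τ) + gradient f (Φtilde τ))
    (Ftilde : ℝ → ℝ)
    (hFtilde : ∀ τ : ℝ, Ftilde τ = F Φn - τ * ⟪μstar τ, matVec M (μstar τ)⟫)
    (Φhat : ℝ → E)
    (hΦhat : ∀ τ : ℝ, Φhat τ = matVec ((1 + (τ / 2) • (M * L))⁻¹)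
      (matVec (1 - (τ / 2) • (M * L)) Φn - τ • matVec M (gradient f (Φtilde τ))))
    (w : ℝ → E)
    (hw : ∀ τ : ℝ, w τ = matVec ((1 + (τ / 2) • (M * L))⁻¹) (g (Φtilde τ)))
    (u : ℝ → ℝ → ℝ)
    (hu : ∀ τ β : ℝ, u τ β = F (Φhat τ + β • w τ) - Ftilde τ)
    (h : E → E) (hgh : ∀ Φ0 : E, g Φ0 = matVec M (h Φ0))
    (e : E) (he : matVec M e = 0) :
    ∀ τ : ℝ, 0 ≤ τ → ∀ β : ℝ, ⟪e, Φhat τ + β • w τ⟫ = ⟪e, Φn⟫ := by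
  intro τ hτ β
  set A : Matrix (Fin n) (Fin n) ℝ := 1 + (τ / 2) • (M * L) with hAdef
  -- e is a left null vector of M
  have heM : (e : Fin n → ℝ) ᵥ* M = 0 := by
    have : Mᵀ *ᵥ (e : Fin n → ℝ) = 0 := by rw [hMsymm.eq]; exact congrArg WithLp.ofLp he
    rwa [mulVec_transpose] at this
  -- A is invertible
  have hAunit : IsUnit A := by
    rw [← Matrix.mulVec_injective_iff_isUnit]
    intro x y hxy
    have hz : A *ᵥ (x - y) = 0 := by
      rw [mulVec_sub, hxy, sub_self]
    by_contra hne
    have hzne : (x - y : Fin n → ℝ) ≠ 0 := sub_ne_zero.mpr (by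
      intro hc; exact hne (by rw [hc]))
    set z : Fin n → ℝ := x - y
    have hexp : (z : Fin n → ℝ) + (τ / 2) • (M *ᵥ (L *ᵥ z)) = 0 := by
      have := hz
      rwa [hAdef, add_mulVec, one_mulVec, smul_mulVec, ← mulVec_mulVec] at this
    have hkey : (0 : ℝ) = (L *ᵥ z) ⬝ᵥ z + (τ / 2) * ((L *ᵥ z) ⬝ᵥ (M *ᵥ (L *ᵥ z))) := by
      have := congrArg (fun v => (L *ᵥ z) ⬝ᵥ v) hexp
      simpa [dotProduct_add, dotProduct_smul, smul_eq_mul] using this.symm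
    have h1 : 0 < (L *ᵥ z) ⬝ᵥ z := by
      have := hLpd (WithLp.toLp 2 z) (by intro hc; apply hzne; simpa using congrArg WithLp.ofLp hc)
      rw [inner_eq_dot] at this
      rw [dotProduct_comm]
      simpa [matVec] using this
    have h2 : 0 ≤ (τ / 2) * ((L *ᵥ z) ⬝ᵥ (M *ᵥ (L *ᵥ z))) := by
      apply mul_nonneg (by linarith)
      have := hMpsd (WithLp.toLp 2 (L *ᵥ z))
      rw [inner_eq_dot] at this
      simpa [matVec] using this
    linarith
  have heA : (e : Fin n → ℝ) ᵥ* A = e := by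
    rw [hAdef, vecMul_add, vecMul_one, vecMul_smul_matrix, ← vecMul_vecMul, heM,
      Matrix.zero_vecMul, smul_zero, add_zero]
  have heAinv : (e : Fin n → ℝ) ᵥ* A⁻¹ = e := by
    conv_lhs => rw [← heA]
    rw [vecMul_vecMul, Matrix.mul_nonsing_inv _ ((Matrix.isUnit_iff_isUnit_det A).mp hAunit),
      vecMul_one]
  have heMdot : ∀ v : Fin n → ℝ, (e : Fin n → ℝ) ⬝ᵥ (M *ᵥ v) = 0 := by
    intro v; rw [dotProduct_mulVec, heM, zero_dotProduct]
  -- compute the two inner products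
  have hhat : ⟪e, Φhat τ⟫ = ⟪e, Φn⟫ := by
    rw [inner_eq_dot e (Φhat τ), inner_eq_dot e Φn, hΦhat τ, matVec_ofLp]
    show (e : Fin n → ℝ) ⬝ᵥ (A⁻¹ *ᵥ _) = _
    rw [dotProduct_mulVec, heAinv]
    show (e : Fin n → ℝ) ⬝ᵥ ((1 - (τ / 2) • (M * L)) *ᵥ (Φn : Fin n → ℝ)
      - τ • (M *ᵥ ((gradient f (Φtilde τ) : E) : Fin n → ℝ))) = _
    rw [dotProduct_sub, dotProduct_smul, sub_mulVec, one_mulVec, smul_mulVec,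
      ← mulVec_mulVec, dotProduct_sub, dotProduct_smul, heMdot, heMdot]
    simp
  have hwz : ⟪e, w τ⟫ = 0 := by
    rw [hw τ, inner_eq_dot, matVec_ofLp]
    show (e : Fin n → ℝ) ⬝ᵥ (A⁻¹ *ᵥ _) = 0
    rw [dotProduct_mulVec, heAinv, hgh]
    exact heMdot _
  rw [inner_add_right, inner_smul_right, hwz, mul_zero, add_zero, hhat]
end
end
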